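/- Let w be a uniformly recurrent infinite partial word such that for each n > 0 there exists an index i with w[i..i+n) hole-free. Then R_w(n) ≥ p_w(n) + n − 1 for all n ≥ 1. -/

import Mathlib

open Set

variable {A : Type*}

/-- The full word `u` occurs at position `i` in the partial word `w`
(`none` is the hole symbol, compatible with every letter). -/
def Occurs (w : ℕ → Option A) (u : List A) (i : ℕ) : Prop :=
  ∀ j : Fin u.length, w (i + (j : ℕ)) = none ∨ w (i + (j : ℕ)) = some (u.get j)

/-- `u` is a subword of `w`: it occurs at some position. -/
def IsSubword (w : ℕ → Option A) (u : List A) : Prop :=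
  ∃ i, Occurs w u i

/-- `u` is a recurrent subword of `w`: it occurs at infinitely many positions. -/
def IsRecSubword (w : ℕ → Option A) (u : List A) : Prop :=
  {i | Occurs w u i}.Infinite

/-- Subword complexity: number of distinct full words of length `n`
that are subwords of `w`. -/
noncomputable def pcomp (w : ℕ → Option A) (n : ℕ) : ℕ :=
  {u : List A | u.length = n ∧ IsSubword w u}.ncard

/-- Number of recurrent subwords of length `n`. -/
noncomputable def rcomp (w : ℕ → Option A) (n : ℕ) : ℕ :=
  {u : List A | u.length = n ∧ IsRecSubword w u}.ncard

/-- `w` is recurrent: every subword occurs infinitely often. -/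
def Recurrent (w : ℕ → Option A) : Prop :=
  ∀ u : List A, IsSubword w u → IsRecSubword w u

/-- `w` is ultimately recurrent: some shift of `w` is recurrent. -/
def UltimatelyRecurrent (w : ℕ → Option A) : Prop :=
  ∃ p, Recurrent (fun i => w (i + p))

/-- `c` is a completion of `w`: it agrees with `w` at every non-hole position. -/
def IsCompletion (w : ℕ → Option A) (c : ℕ → A) : Prop :=
  ∀ i, ∀ a : A, w i = some a → c i = a

/-- `w` is uniformly recurrent: for every subword `u` there is a window size `m`
such that every factor of `w` of length `m` contains an occurrence of `u`. -/
def UniformlyRecurrent (w : ℕ → Option A) : Prop :=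
  ∀ u : List A, IsSubword w u →
    ∃ m, ∀ i, ∃ j, i ≤ j ∧ j + u.length ≤ i + m ∧ Occurs w u j

/-- Every factor of `w` of length `m` contains every length-`n` subword of `w`. -/
def GoodWindow (w : ℕ → Option A) (n m : ℕ) : Prop :=
  ∀ u : List A, u.length = n → IsSubword w u →
    ∀ i, ∃ j, i ≤ j ∧ j + n ≤ i + m ∧ Occurs w u j

/-- The recurrence function `R_w(n)`: the least window size `m` such that every
factor of length `m` contains every subword of length `n`. -/
noncomputable def Rfun (w : ℕ → Option A) (n : ℕ) : ℕ :=
  sInf {m | GoodWindow w n m}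

/-- `w` is ultimately periodic: from some position on, `w` is compatible with a
periodic sequence of letters. -/
def UltimatelyPeriodic (w : ℕ → Option A) : Prop :=
  ∃ N p, 0 < p ∧ ∃ a : ℕ → A, ∀ i, N ≤ i → w i = none ∨ w i = some (a (i % p))

theorem stmt8 [Fintype A] (w : ℕ → Option A) (h : UniformlyRecurrent w)
    (hfull : ∀ n > 0, ∃ i, ∀ j < n, w (i + j) ≠ none) :
    ∀ n ≥ 1, pcomp w n + n - 1 ≤ Rfun w n := by
  intro n hn
  classical
  set S : Set (List A) := {u : List A | u.length = n ∧ IsSubword w u} with hS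
  have hSfin : S.Finite := (List.finite_length_eq A n).subset (fun u hu => hu.1)
  -- a subword of length n exists
  obtain ⟨i₁, hi₁⟩ := hfull n (by omega)
  set u₀ : List A := List.ofFn (fun j : Fin n =>
    (w (i₁ + j)).get (Option.ne_none_iff_isSome.mp (hi₁ j j.isLt))) with hu₀
  have hu₀len : u₀.length = n := List.length_ofFn
  have hu₀occ : Occurs w u₀ i₁ := by
    intro j
    right
    simp [u₀, List.get_ofFn]
  have hu₀S : u₀ ∈ S := ⟨hu₀len, ⟨i₁, hu₀occ⟩⟩
  -- main per-window bound
  have key : ∀ m, GoodWindow w n m → pcomp w n + n - 1 ≤ m := by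
    intro m hm
    have hnm : n ≤ m := by
      obtain ⟨j, hj0, hjm, -⟩ := hm u₀ hu₀len ⟨i₁, hu₀occ⟩ 0
      omega
    obtain ⟨i, hi⟩ := hfull m (by omega)
    -- assign to each subword an occurrence in the hole-free window
    set f : List A → ℕ := fun u =>
      if hu : u.length = n ∧ IsSubword w u then (hm u hu.1 hu.2 i).choose else 0 with hf
    have hfspec : ∀ u ∈ S, i ≤ f u ∧ f u + n ≤ i + m ∧ Occurs w u (f u) := by
      intro u hu
      have : f u = (hm u hu.1 hu.2 i).choose := by simp [hf, hu.1, hu.2]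
      rw [this]
      exact (hm u hu.1 hu.2 i).choose_spec
    have hmaps : ∀ u ∈ S, f u ∈ Set.Icc i (i + (m - n)) := by
      intro u hu
      obtain ⟨h1, h2, -⟩ := hfspec u hu
      exact ⟨h1, by omega⟩
    have hinj : Set.InjOn f S := by
      intro u hu v hv heq
      obtain ⟨hu1, hu2, hu3⟩ := hfspec u hu
      obtain ⟨hv1, hv2, hv3⟩ := hfspec v hv
      have hlen : u.length = v.length := by rw [hu.1, hv.1]
      apply List.ext_get hlen
      intro k hk hk'
      have hul : u.length = n := hu.1
      have hvl : v.length = n := hv.1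
      have hkn : k < n := by omega
      have hne : w (f u + k) ≠ none := by
        have : f u + k = i + (f u + k - i) := by omega
        rw [this]
        exact hi _ (by omega)
      have h1 := hu3 ⟨k, hk⟩
      have h2 := hv3 ⟨k, hk'⟩
      simp only at h1 h2
      rw [← heq] at h2
      rcases h1 with h1 | h1
      · exact absurd h1 hne
      rcases h2 with h2 | h2
      · exact absurd h2 hne
      rw [h1] at h2
      exact Option.some.inj h2
    have hcard : S.ncard ≤ (Set.Icc i (i + (m - n))).ncard := by
      exact Set.ncard_le_ncard_of_injOn f hmaps hinj (Set.finite_Icc _ _)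
    have hIcc : (Set.Icc i (i + (m - n))).ncard = m - n + 1 := by
      rw [← Finset.coe_Icc, Set.ncard_coe_finset, Nat.card_Icc]
      omega
    have hp : pcomp w n ≤ m - n + 1 := by
      rw [pcomp, ← hS]; omega
    omega
  -- the set of good windows is nonempty
  set F : List A → ℕ := fun u => if hu : IsSubword w u then (h u hu).choose else 0 with hF
  set M : ℕ := hSfin.toFinset.sup F with hM
  have hgood : GoodWindow w n M := by
    intro u hulen husub j
    have hFu : F u = (h u husub).choose := by simp [hF, husub]
    have hle : F u ≤ M := Finset.le_sup (by simp [hSfin.mem_toFinset, hS, hulen, husub])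
    obtain ⟨k, hk1, hk2, hk3⟩ := (h u husub).choose_spec j
    rw [hFu] at hle
    exact ⟨k, hk1, by omega, hk3⟩
  exact le_csInf ⟨M, hgood⟩ (fun m hm => key m hm)
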